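/- arXiv:1701.09185 — 2 statements merged into one kernel-verified Lean document; each statement's English description precedes it below -/
import Mathlib

section
/- (Reduction algorithm, open boundary conditions.) Consider the Widom–Rowlinson model with M ≥ 2 particle types on the K×L square lattice Λ with open boundary conditions. Let m ∈ {1,…,M} and let σ ∈ X be a configuration such that σ(v) ∈ {0, m} for every site v in the first column c_0. Then there exists a path ω : σ → s^(m) in X with Φ_ω ≤ H(σ) + 1; in particular Φ(σ, s^(m)) − H(σ) ≤ 1. -/
/-- Sites of the `K × L` square lattice with open boundary conditions:
`(j, i)` lies in column `c_j` and row `r_i`. -/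
abbrev SiteO (K L : ℕ) := Fin L × Fin K

/-- Adjacency on the open lattice: the two sites agree in one coordinate and
differ by exactly `1` in the other (no wrap-around). -/
def adjO (K L : ℕ) (v w : SiteO K L) : Prop :=
  (v.2 = w.2 ∧ ((v.1 : ℕ) + 1 = (w.1 : ℕ) ∨ (w.1 : ℕ) + 1 = (v.1 : ℕ))) ∨
  (v.1 = w.1 ∧ ((v.2 : ℕ) + 1 = (w.2 : ℕ) ∨ (w.2 : ℕ) + 1 = (v.2 : ℕ)))

/-- Widom–Rowlinson configurations with `M` particle types on the open lattice. -/
def IsWRO (K L M : ℕ) (σ : SiteO K L → ℕ) : Prop :=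
  (∀ v, σ v ≤ M) ∧ ∀ v w, adjO K L v w → σ v = 0 ∨ σ w = 0 ∨ σ v = σ w

/-- The energy `H(σ) = -#{v : σ v ≠ 0}`. -/
noncomputable def HO (K L : ℕ) (σ : SiteO K L → ℕ) : ℤ :=
  -(Nat.card {v : SiteO K L // σ v ≠ 0} : ℤ)

/-- `σ` and `σ'` are related by a single-site update: they differ at exactly
one site `v`, and moreover `σ v = 0` or `σ' v = 0`. -/
def UpdO (K L : ℕ) (σ σ' : SiteO K L → ℕ) : Prop :=
  ∃ v, (σ v = 0 ∨ σ' v = 0) ∧ σ v ≠ σ' v ∧ ∀ w, w ≠ v → σ w = σ' w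

/-- A path `ω : σ → σ'`: a finite nonempty sequence of WR configurations from
`σ` to `σ'` whose consecutive configurations coincide or are related by a
single-site update. -/
def IsPathO (K L M : ℕ) (ω : List (SiteO K L → ℕ)) (σ σ' : SiteO K L → ℕ) : Prop :=
  ω ≠ [] ∧ ω.head? = some σ ∧ ω.getLast? = some σ' ∧
    (∀ η ∈ ω, IsWRO K L M η) ∧
    ω.Chain' (fun η η' => η = η' ∨ UpdO K L η η')

/-- The height `Φ_ω` of a path: the maximum energy along it. -/
noncomputable def heightO (K L : ℕ) (ω : List (SiteO K L → ℕ)) : ℤ :=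
  sSup {h : ℤ | ∃ η ∈ ω, HO K L η = h}

/-- The communication height `Φ(σ,σ')`: the minimal height over all paths
`ω : σ → σ'`. -/
noncomputable def commO (K L M : ℕ) (σ σ' : SiteO K L → ℕ) : ℤ :=
  sInf {h : ℤ | ∃ ω, IsPathO K L M ω σ σ' ∧ heightO K L ω = h}

/-- The set `X^s = {s^(1),…,s^(M)}` of stable configurations. -/
def stableO (K L M : ℕ) : Set (SiteO K L → ℕ) :=
  {σ | ∃ m : ℕ, 1 ≤ m ∧ m ≤ M ∧ σ = fun _ => m}



namespace WRaux

variable {K L M : ℕ}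

lemma adjO_symm {v w : SiteO K L} (h : adjO K L v w) : adjO K L w v := by
  rcases h with ⟨h1, h2⟩ | ⟨h1, h2⟩
  · exact Or.inl ⟨h1.symm, h2.symm⟩
  · exact Or.inr ⟨h1.symm, h2.symm⟩

/-- occupied sites -/
def occ (K L : ℕ) (σ : SiteO K L → ℕ) : Finset (SiteO K L) :=
  Finset.univ.filter (fun v => σ v ≠ 0)

lemma HO_eq (σ : SiteO K L → ℕ) : HO K L σ = -((occ K L σ).card : ℤ) := by
  unfold HO occ
  rw [Nat.card_eq_fintype_card, Fintype.card_subtype]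

lemma HO_nonpos (σ : SiteO K L → ℕ) : HO K L σ ≤ 0 := by
  rw [HO_eq]; simp

lemma HO_lower (σ : SiteO K L → ℕ) : -((L * K : ℕ) : ℤ) ≤ HO K L σ := by
  rw [HO_eq]
  have : (occ K L σ).card ≤ L * K := by
    calc (occ K L σ).card ≤ (Finset.univ : Finset (SiteO K L)).card :=
          Finset.card_filter_le _ _
      _ = L * K := by simp [Finset.card_univ]
  omega

lemma HO_update_zero (σ : SiteO K L → ℕ) (v : SiteO K L) (hv : σ v ≠ 0) :
    HO K L (Function.update σ v 0) = HO K L σ + 1 := by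
  have hocc : occ K L (Function.update σ v 0) = (occ K L σ).erase v := by
    ext w
    simp only [occ, Finset.mem_filter, Finset.mem_univ, true_and, Finset.mem_erase]
    by_cases hw : w = v
    · subst hw; simp
    · rw [Function.update_of_ne hw]; tauto
  have hmem : v ∈ occ K L σ := by simp [occ, hv]
  have hpos : 0 < (occ K L σ).card := Finset.card_pos.mpr ⟨v, hmem⟩
  rw [HO_eq, HO_eq, hocc, Finset.card_erase_of_mem hmem]
  omega

lemma HO_update_fill (σ : SiteO K L → ℕ) (v : SiteO K L) (hv : σ v = 0) {c : ℕ}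
    (hc : c ≠ 0) : HO K L (Function.update σ v c) = HO K L σ - 1 := by
  have hocc : occ K L (Function.update σ v c) = insert v (occ K L σ) := by
    ext w
    simp only [occ, Finset.mem_filter, Finset.mem_univ, true_and, Finset.mem_insert]
    by_cases hw : w = v
    · subst hw; simp [hc]
    · rw [Function.update_of_ne hw]; tauto
  have hnmem : v ∉ occ K L σ := by simp [occ, hv]
  rw [HO_eq, HO_eq, hocc, Finset.card_insert_of_notMem hnmem]
  push_cast; ring

lemma path_append {ω₁ ω₂ : List (SiteO K L → ℕ)} {σ τ σ' : SiteO K L → ℕ}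
    (h₁ : IsPathO K L M ω₁ σ τ) (h₂ : IsPathO K L M ω₂ τ σ') :
    IsPathO K L M (ω₁ ++ ω₂) σ σ' := by
  obtain ⟨hne₁, hh₁, hl₁, hwr₁, hc₁⟩ := h₁
  obtain ⟨hne₂, hh₂, hl₂, hwr₂, hc₂⟩ := h₂
  refine ⟨by simp [hne₁], ?_, ?_, ?_, ?_⟩
  · rcases ω₁ with _ | ⟨a, t⟩
    · exact absurd rfl hne₁
    · simpa using hh₁
  · rw [List.getLast?_append_of_ne_nil _ hne₂]; exact hl₂
  · intro η hη
    rcases List.mem_append.mp hη with h | h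
    · exact hwr₁ η h
    · exact hwr₂ η h
  · rw [List.Chain', List.isChain_append]
    refine ⟨hc₁, hc₂, ?_⟩
    intro x hx y hy
    rw [hl₁] at hx
    rw [hh₂] at hy
    cases hx; cases hy
    exact Or.inl rfl



/-- wrong particles -/
def Wfin (K L : ℕ) (m : ℕ) (σ : SiteO K L → ℕ) : Finset (SiteO K L) :=
  Finset.univ.filter (fun v => σ v ≠ 0 ∧ σ v ≠ m)

/-- the ranking function -/
def grk (L : ℕ) (v : SiteO K L) : ℕ := ((v.2 : ℕ) + (v.1 : ℕ)) * L + (v.1 : ℕ)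

lemma grk_lt {v w : SiteO K L}
    (h1 : (w.2 : ℕ) + (w.1 : ℕ) ≤ (v.2 : ℕ) + (v.1 : ℕ))
    (h2 : (w.1 : ℕ) < (v.1 : ℕ)) : grk L w < grk L v := by
  unfold grk
  have := Nat.mul_le_mul_right L h1
  exact Nat.lt_of_lt_of_le (Nat.add_lt_add_left h2 _)
    (Nat.add_le_add_right this _)

lemma key_step (m : ℕ) (hm1 : 1 ≤ m) (hmM : m ≤ M)
    (σ : SiteO K L → ℕ) (hσ : IsWRO K L M σ)
    (hcol : ∀ v : SiteO K L, (v.1 : ℕ) = 0 → σ v = 0 ∨ σ v = m)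
    (hW : (Wfin K L m σ).Nonempty) :
    ∃ σ₁ σ₂ : SiteO K L → ℕ,
      UpdO K L σ σ₁ ∧ UpdO K L σ₁ σ₂ ∧ IsWRO K L M σ₁ ∧ IsWRO K L M σ₂ ∧
      HO K L σ₁ = HO K L σ + 1 ∧ HO K L σ₂ = HO K L σ ∧
      (Wfin K L m σ₂).card + 1 = (Wfin K L m σ).card ∧
      (∀ v : SiteO K L, (v.1 : ℕ) = 0 → σ₂ v = 0 ∨ σ₂ v = m) := by
  obtain ⟨v, hvW, hvmin⟩ := Finset.exists_min_image (Wfin K L m σ) (grk L) hW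
  have hv : σ v ≠ 0 ∧ σ v ≠ m := by
    simpa [Wfin] using hvW
  have notW : ∀ w : SiteO K L, grk L w < grk L v → σ w = 0 ∨ σ w = m := by
    intro w hw
    by_contra hcon
    push_neg at hcon
    have : w ∈ Wfin K L m σ := by simp [Wfin, hcon.1, hcon.2]
    exact absurd (hvmin w this) (by omega)
  -- v is not in column 0
  have hv1 : 1 ≤ (v.1 : ℕ) := by
    by_contra h
    push_neg at h
    rcases hcol v (by omega) with h0 | h0
    · exact hv.1 h0
    · exact hv.2 h0
  -- the site to the left of v
  set u : SiteO K L := (⟨(v.1 : ℕ) - 1, by omega⟩, v.2) with hu_def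
  have hu1 : (u.1 : ℕ) + 1 = (v.1 : ℕ) := by simp [hu_def]; omega
  have hu2 : u.2 = v.2 := rfl
  have huv : u ≠ v := by
    intro h
    rw [h] at hu1
    omega
  have hadj_uv : adjO K L u v := Or.inl ⟨rfl, Or.inl hu1⟩
  -- any neighbor of u other than v has smaller rank than v
  have hnbr : ∀ w : SiteO K L, adjO K L u w → w ≠ v → grk L w < grk L v := by
    intro w hadj hwv
    rcases hadj with ⟨h1, h2 | h2⟩ | ⟨h1, h2 | h2⟩
    · -- w is the right neighbor of u, so w = v : contradiction
      exfalso
      apply hwv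
      have : (w.1 : ℕ) = (v.1 : ℕ) := by omega
      exact Prod.ext (Fin.ext this) ((h1.symm).trans hu2)
    · -- w is the left neighbor of u
      apply grk_lt
      · have : (w.2 : ℕ) = (v.2 : ℕ) := by rw [← h1, hu2]
        omega
      · omega
    · -- w below u
      apply grk_lt
      · have hw1 : (w.1 : ℕ) = (u.1 : ℕ) := by rw [← h1]
        have : (u.2 : ℕ) = (v.2 : ℕ) := by rw [hu2]
        omega
      · have hw1 : (w.1 : ℕ) = (u.1 : ℕ) := by rw [← h1]
        omega
    · -- w above u
      apply grk_lt
      · have hw1 : (w.1 : ℕ) = (u.1 : ℕ) := by rw [← h1]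
        have : (u.2 : ℕ) = (v.2 : ℕ) := by rw [hu2]
        omega
      · have hw1 : (w.1 : ℕ) = (u.1 : ℕ) := by rw [← h1]
        omega
  have hgu : grk L u < grk L v := grk_lt (by rw [hu2]; omega) (by omega)
  -- u is empty
  have hu0 : σ u = 0 := by
    rcases notW u hgu with h | h
    · exact h
    · exfalso
      rcases hσ.2 u v hadj_uv with h0 | h0 | h0
      · rw [h] at h0; omega
      · exact hv.1 h0
      · rw [h] at h0; exact hv.2 h0.symm
  set σ₁ : SiteO K L → ℕ := Function.update σ v 0 with hσ₁
  set σ₂ : SiteO K L → ℕ := Function.update σ₁ u m with hσ₂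
  have hσ₁v : σ₁ v = 0 := Function.update_self _ _ _
  have hσ₁w : ∀ w, w ≠ v → σ₁ w = σ w := fun w hw => Function.update_of_ne hw _ _
  have hσ₂u : σ₂ u = m := Function.update_self _ _ _
  have hσ₂w : ∀ w, w ≠ u → σ₂ w = σ₁ w := fun w hw => Function.update_of_ne hw _ _
  have hσ₂v : σ₂ v = 0 := by rw [hσ₂w v huv.symm, hσ₁v]
  -- WR property of σ₁
  have hwr₁ : IsWRO K L M σ₁ := by
    constructor
    · intro w
      by_cases hw : w = v
      · subst hw; rw [hσ₁v]; omega
      · rw [hσ₁w w hw]; exact hσ.1 w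
    · intro x y hxy
      by_cases hx : x = v
      · subst hx; rw [hσ₁v]; exact Or.inl rfl
      · by_cases hy : y = v
        · subst hy; rw [hσ₁v]; exact Or.inr (Or.inl rfl)
        · rw [hσ₁w x hx, hσ₁w y hy]; exact hσ.2 x y hxy
  -- neighbors of u in σ₁ are 0 or m
  have hnbr₁ : ∀ w, adjO K L u w → σ₁ w = 0 ∨ σ₁ w = m := by
    intro w hadj
    by_cases hw : w = v
    · subst hw; exact Or.inl hσ₁v
    · rw [hσ₁w w hw]
      exact notW w (hnbr w hadj hw)
  -- WR property of σ₂
  have hwr₂ : IsWRO K L M σ₂ := by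
    constructor
    · intro w
      by_cases hw : w = u
      · subst hw; rw [hσ₂u]; exact hmM
      · rw [hσ₂w w hw]; exact hwr₁.1 w
    · intro x y hxy
      by_cases hx : x = u
      · subst hx
        by_cases hy : y = u
        · subst hy; exact Or.inr (Or.inr rfl)
        · rw [hσ₂w y hy]
          rcases hnbr₁ y hxy with h | h
          · exact Or.inr (Or.inl h)
          · exact Or.inr (Or.inr (by rw [hσ₂u, h]))
      · by_cases hy : y = u
        · subst hy
          rw [hσ₂w x hx]
          rcases hnbr₁ x (adjO_symm hxy) with h | h
          · exact Or.inl h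
          · exact Or.inr (Or.inr (by rw [hσ₂u, h]))
        · rw [hσ₂w x hx, hσ₂w y hy]; exact hwr₁.2 x y hxy
  -- updates
  have hupd₁ : UpdO K L σ σ₁ := by
    refine ⟨v, Or.inr hσ₁v, by rw [hσ₁v]; exact hv.1, fun w hw => (hσ₁w w hw).symm⟩
  have hupd₂ : UpdO K L σ₁ σ₂ := by
    have : σ₁ u = 0 := by rw [hσ₁w u huv, hu0]
    refine ⟨u, Or.inl this, by rw [this, hσ₂u]; omega, fun w hw => (hσ₂w w hw).symm⟩
  -- energies
  have hH₁ : HO K L σ₁ = HO K L σ + 1 := HO_update_zero σ v hv.1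
  have hH₂ : HO K L σ₂ = HO K L σ := by
    have h1u : σ₁ u = 0 := by rw [hσ₁w u huv, hu0]
    rw [hσ₂, HO_update_fill σ₁ u h1u (by omega), hH₁]
    ring
  -- wrong set shrinks
  have hWcard : (Wfin K L m σ₂).card + 1 = (Wfin K L m σ).card := by
    have hset : Wfin K L m σ₂ = (Wfin K L m σ).erase v := by
      ext w
      simp only [Wfin, Finset.mem_filter, Finset.mem_univ, true_and, Finset.mem_erase]
      by_cases hwv : w = v
      · subst hwv; simp [hσ₂v]
      · by_cases hwu : w = u
        · subst hwu
          simp [hσ₂u, hu0, hwv]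
        · rw [hσ₂w w hwu, hσ₁w w hwv]
          tauto
    rw [hset, Finset.card_erase_of_mem hvW]
    have : 0 < (Wfin K L m σ).card := Finset.card_pos.mpr hW
    omega
  -- column 0 invariant
  have hcol₂ : ∀ w : SiteO K L, (w.1 : ℕ) = 0 → σ₂ w = 0 ∨ σ₂ w = m := by
    intro w hw
    by_cases hwu : w = u
    · subst hwu; exact Or.inr hσ₂u
    · by_cases hwv : w = v
      · subst hwv; omega
      · rw [hσ₂w w hwu, hσ₁w w hwv]
        exact hcol w hw
  exact ⟨σ₁, σ₂, hupd₁, hupd₂, hwr₁, hwr₂, hH₁, hH₂, hWcard, hcol₂⟩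

lemma phase1 (m : ℕ) (hm1 : 1 ≤ m) (hmM : m ≤ M) :
    ∀ n : ℕ, ∀ σ : SiteO K L → ℕ, IsWRO K L M σ →
    (∀ v : SiteO K L, (v.1 : ℕ) = 0 → σ v = 0 ∨ σ v = m) →
    (Wfin K L m σ).card = n →
    ∃ (ω : List (SiteO K L → ℕ)) (τ : SiteO K L → ℕ),
      IsPathO K L M ω σ τ ∧ (∀ η ∈ ω, HO K L η ≤ HO K L σ + 1) ∧
      HO K L τ = HO K L σ ∧ (∀ w, τ w = 0 ∨ τ w = m) := by
  intro n
  induction n with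
  | zero =>
    intro σ hσ hcol hcard
    refine ⟨[σ], σ, ⟨by simp, by simp, by simp, by simp [hσ], List.isChain_singleton _⟩, ?_, rfl, ?_⟩
    · intro η hη
      simp at hη
      subst hη
      omega
    · intro w
      by_contra hcon
      push_neg at hcon
      have : w ∈ Wfin K L m σ := by simp [Wfin, hcon.1, hcon.2]
      rw [Finset.card_eq_zero.mp hcard] at this
      simp at this
  | succ n ih =>
    intro σ hσ hcol hcard
    have hW : (Wfin K L m σ).Nonempty := by
      rw [← Finset.card_pos, hcard]; omega
    obtain ⟨σ₁, σ₂, hupd₁, hupd₂, hwr₁, hwr₂, hH₁, hH₂, hWcard, hcol₂⟩ :=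
      key_step m hm1 hmM σ hσ hcol hW
    obtain ⟨ω', τ, hpath', hht', hHτ, hτ⟩ := ih σ₂ hwr₂ hcol₂ (by omega)
    have hpath₁ : IsPathO K L M [σ, σ₁, σ₂] σ σ₂ := by
      refine ⟨by simp, by simp, by simp, ?_, ?_⟩
      · intro η hη
        simp at hη
        rcases hη with h | h | h <;> subst h
        · exact hσ
        · exact hwr₁
        · exact hwr₂
      · exact List.isChain_cons_cons.mpr ⟨Or.inr hupd₁,
          List.isChain_cons_cons.mpr ⟨Or.inr hupd₂, List.isChain_singleton _⟩⟩
    refine ⟨[σ, σ₁, σ₂] ++ ω', τ, path_append hpath₁ hpath', ?_, by rw [hHτ, hH₂], hτ⟩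
    intro η hη
    rcases List.mem_append.mp hη with h | h
    · simp at h
      rcases h with h | h | h <;> subst h <;> omega
    · have := hht' η h
      omega

def Zfin (K L : ℕ) (τ : SiteO K L → ℕ) : Finset (SiteO K L) :=
  Finset.univ.filter (fun v => τ v = 0)

lemma phase2 (m : ℕ) (hm1 : 1 ≤ m) (hmM : m ≤ M) :
    ∀ n : ℕ, ∀ τ : SiteO K L → ℕ, (∀ w, τ w = 0 ∨ τ w = m) →
    (Zfin K L τ).card = n →
    ∃ ω : List (SiteO K L → ℕ),
      IsPathO K L M ω τ (fun _ => m) ∧ ∀ η ∈ ω, HO K L η ≤ HO K L τ := by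
  intro n
  induction n with
  | zero =>
    intro τ hτ hcard
    have hτm : τ = (fun _ => m) := by
      funext w
      rcases hτ w with h | h
      · exfalso
        have : w ∈ Zfin K L τ := by simp [Zfin, h]
        rw [Finset.card_eq_zero.mp hcard] at this
        simp at this
      · exact h
    subst hτm
    refine ⟨[fun _ => m], ⟨by simp, by simp, by simp, ?_, List.isChain_singleton _⟩, ?_⟩
    · intro η hη
      simp at hη
      subst hη
      exact ⟨fun _ => hmM, fun v w _ => Or.inr (Or.inr rfl)⟩
    · intro η hη
      simp at hη
      subst hη
      omega
  | succ n ih =>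
    intro τ hτ hcard
    have hZ : (Zfin K L τ).Nonempty := by
      rw [← Finset.card_pos, hcard]; omega
    obtain ⟨u, huZ⟩ := hZ
    have hu0 : τ u = 0 := by simpa [Zfin] using huZ
    set τ' : SiteO K L → ℕ := Function.update τ u m with hτ'def
    have hτ'u : τ' u = m := Function.update_self _ _ _
    have hτ'w : ∀ w, w ≠ u → τ' w = τ w := fun w hw => Function.update_of_ne hw _ _
    have hτ' : ∀ w, τ' w = 0 ∨ τ' w = m := by
      intro w
      by_cases hw : w = u
      · subst hw; exact Or.inr hτ'u
      · rw [hτ'w w hw]; exact hτ w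
    have hZ' : Zfin K L τ' = (Zfin K L τ).erase u := by
      ext w
      simp only [Zfin, Finset.mem_filter, Finset.mem_univ, true_and, Finset.mem_erase]
      by_cases hw : w = u
      · subst hw; simp [hτ'u]; omega
      · rw [hτ'w w hw]; tauto
    have hH' : HO K L τ' = HO K L τ - 1 := HO_update_fill τ u hu0 (by omega)
    obtain ⟨ω', hpath', hht'⟩ := ih τ' hτ'
      (by rw [hZ', Finset.card_erase_of_mem huZ, hcard]; omega)
    have hwrτ : IsWRO K L M τ := by
      refine ⟨fun w => ?_, fun x y _ => ?_⟩
      · rcases hτ w with h | h <;> omega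
      · rcases hτ x with h | h
        · exact Or.inl h
        · rcases hτ y with h' | h'
          · exact Or.inr (Or.inl h')
          · exact Or.inr (Or.inr (h.trans h'.symm))
    have hwrτ' : IsWRO K L M τ' := by
      refine ⟨fun w => ?_, fun x y _ => ?_⟩
      · rcases hτ' w with h | h <;> omega
      · rcases hτ' x with h | h
        · exact Or.inl h
        · rcases hτ' y with h' | h'
          · exact Or.inr (Or.inl h')
          · exact Or.inr (Or.inr (h.trans h'.symm))
    have hupd : UpdO K L τ τ' := by
      refine ⟨u, Or.inl hu0, by rw [hu0, hτ'u]; omega, fun w hw => (hτ'w w hw).symm⟩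
    have hpath₁ : IsPathO K L M [τ, τ'] τ τ' :=
      ⟨by simp, by simp, by simp, by
        intro η hη
        simp at hη
        rcases hη with h | h <;> subst h
        · exact hwrτ
        · exact hwrτ',
       List.isChain_cons_cons.mpr ⟨Or.inr hupd, List.isChain_singleton _⟩⟩
    refine ⟨[τ, τ'] ++ ω', path_append hpath₁ hpath', ?_⟩
    intro η hη
    rcases List.mem_append.mp hη with h | h
    · simp at h
      rcases h with h | h <;> subst h <;> omega
    · have := hht' η h
      omega

end WRaux

/-- Reduction algorithm, open boundary conditions: if `σ ∈ X` has only empty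
sites or particles of type `m` in the first column `c_0`, then there is a path
`ω : σ → s^(m)` with `Φ_ω ≤ H(σ) + 1`; in particular
`Φ(σ, s^(m)) - H(σ) ≤ 1`. -/
theorem reduction_algorithm_open (K L M : ℕ)
    (hK : 2 ≤ K) (hL : 2 ≤ L) (hM : 2 ≤ M)
    (m : ℕ) (hm1 : 1 ≤ m) (hmM : m ≤ M)
    (σ : SiteO K L → ℕ) (hσ : IsWRO K L M σ)
    (hcol : ∀ v : SiteO K L, (v.1 : ℕ) = 0 → σ v = 0 ∨ σ v = m) :
    (∃ ω : List (SiteO K L → ℕ),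
      IsPathO K L M ω σ (fun _ => m) ∧ heightO K L ω ≤ HO K L σ + 1) ∧
    commO K L M σ (fun _ => m) - HO K L σ ≤ 1 := by
  obtain ⟨ω₁, τ, hp1, hh1, hHτ, hτ⟩ :=
    WRaux.phase1 m hm1 hmM (WRaux.Wfin K L m σ).card σ hσ hcol rfl
  obtain ⟨ω₂, hp2, hh2⟩ :=
    WRaux.phase2 m hm1 hmM (WRaux.Zfin K L τ).card τ hτ rfl
  have hpath : IsPathO K L M (ω₁ ++ ω₂) σ (fun _ => m) := WRaux.path_append hp1 hp2
  have hbound : ∀ η ∈ ω₁ ++ ω₂, HO K L η ≤ HO K L σ + 1 := by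
    intro η hη
    rcases List.mem_append.mp hη with h | h
    · exact hh1 η h
    · have := hh2 η h
      omega
  have hmemσ : σ ∈ ω₁ ++ ω₂ := by
    apply List.mem_of_mem_head?
    rw [hpath.2.1]
    rfl
  have hheight : heightO K L (ω₁ ++ ω₂) ≤ HO K L σ + 1 := by
    apply csSup_le
    · exact ⟨HO K L σ, σ, hmemσ, rfl⟩
    · rintro h ⟨η, hη, rfl⟩
      exact hbound η hη
  refine ⟨⟨ω₁ ++ ω₂, hpath, hheight⟩, ?_⟩
  have hbdd : BddBelow {h : ℤ | ∃ ω, IsPathO K L M ω σ (fun _ => m) ∧ heightO K L ω = h} := by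
    refine ⟨-((L * K : ℕ) : ℤ), ?_⟩
    rintro h ⟨ω', hω', rfl⟩
    have hmem' : σ ∈ ω' := by
      apply List.mem_of_mem_head?
      rw [hω'.2.1]
      rfl
    have hub : BddAbove {h : ℤ | ∃ η ∈ ω', HO K L η = h} := by
      refine ⟨0, ?_⟩
      rintro h ⟨η, hη, rfl⟩
      exact WRaux.HO_nonpos η
    calc -((L * K : ℕ) : ℤ) ≤ HO K L σ := WRaux.HO_lower σ
      _ ≤ heightO K L ω' := le_csSup hub ⟨σ, hmem', rfl⟩
  have hle : commO K L M σ (fun _ => m) ≤ heightO K L (ω₁ ++ ω₂) :=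
    csInf_le hbdd ⟨ω₁ ++ ω₂, hpath, rfl⟩
  omega
end

section
/- (Projection onto two particle types.) Let G be a finite simple graph and M ≥ 2, and define the map ξ̂ on configurations by [ξ̂(σ)](v) = σ(v) if σ(v) ∈ {0,1,2} and [ξ̂(σ)](v) = 1 if σ(v) ∈ {3,…,M}. Then: (a) ξ̂ maps X into X; (b) H(ξ̂(σ)) = H(σ) for every σ ∈ X; (c) if σ, σ' ∈ X are related by a single-site update, then ξ̂(σ) and ξ̂(σ') are related by a single-site update. Consequently, any path ω : σ → σ' in X is mapped to a path ξ̂(ω) : ξ̂(σ) → ξ̂(σ') of the same length and with the same energy profile, so Φ_{ξ̂(ω)} = Φ_ω. -/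
/-- A Widom–Rowlinson configuration with `M` particle types on the graph `G`:
values in `{0,1,…,M}` and no two adjacent sites occupied by different nonzero types. -/
def IsWR {V : Type*} (G : SimpleGraph V) (M : ℕ) (σ : V → ℕ) : Prop :=
  (∀ v, σ v ≤ M) ∧ ∀ v w, G.Adj v w → σ v = 0 ∨ σ w = 0 ∨ σ v = σ w

/-- The energy `H(σ) = -#{v : σ v ≠ 0}`. -/
noncomputable def Hen {V : Type*} (σ : V → ℕ) : ℤ :=
  -(Nat.card {v : V // σ v ≠ 0} : ℤ)

/-- `σ` and `σ'` are related by a single-site update: they differ at exactly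
one site `v`, and moreover `σ v = 0` or `σ' v = 0`. -/
def Upd {V : Type*} (σ σ' : V → ℕ) : Prop :=
  ∃ v, (σ v = 0 ∨ σ' v = 0) ∧ σ v ≠ σ' v ∧ ∀ w, w ≠ v → σ w = σ' w

/-- A path `ω : σ → σ'`: a finite nonempty sequence of WR configurations from
`σ` to `σ'` whose consecutive configurations coincide or are related by a
single-site update. -/
def IsPath {V : Type*} (G : SimpleGraph V) (M : ℕ)
    (ω : List (V → ℕ)) (σ σ' : V → ℕ) : Prop :=
  ω ≠ [] ∧ ω.head? = some σ ∧ ω.getLast? = some σ' ∧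
    (∀ η ∈ ω, IsWR G M η) ∧
    ω.Chain' (fun η η' => η = η' ∨ Upd η η')

/-- The height `Φ_ω` of a path: the maximum energy along it. -/
noncomputable def pathHeight {V : Type*} (ω : List (V → ℕ)) : ℤ :=
  sSup {h : ℤ | ∃ η ∈ ω, Hen η = h}

/-- The communication height `Φ(σ,σ')`: the minimal height over all paths
`ω : σ → σ'`. -/
noncomputable def commH {V : Type*} (G : SimpleGraph V) (M : ℕ)
    (σ σ' : V → ℕ) : ℤ :=
  sInf {h : ℤ | ∃ ω, IsPath G M ω σ σ' ∧ pathHeight ω = h}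

/-- The projection `ξ̂` onto two particle types: particles of types `3,…,M`
are replaced by particles of type `1`. -/
def hatXi {V : Type*} (σ : V → ℕ) : V → ℕ :=
  fun v => if σ v ≤ 2 then σ v else 1


lemma hatXi_zero_iff {V : Type*} (σ : V → ℕ) (v : V) :
    hatXi σ v = 0 ↔ σ v = 0 := by
  unfold hatXi; split <;> omega

lemma Hen_hatXi {V : Type*} (σ : V → ℕ) : Hen (hatXi σ) = Hen σ := by
  unfold Hen
  have : Nat.card {v // hatXi σ v ≠ 0} = Nat.card {v // σ v ≠ 0} :=
    Nat.card_congr (Equiv.subtypeEquivRight fun v => by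
      rw [not_iff_not, hatXi_zero_iff])
  rw [this]

lemma Upd_hatXi {V : Type*} {σ σ' : V → ℕ} (h : Upd σ σ') :
    Upd (hatXi σ) (hatXi σ') := by
  obtain ⟨v, h0, hne, hw⟩ := h
  refine ⟨v, ?_, ?_, fun w hwv => by unfold hatXi; rw [hw w hwv]⟩
  · rcases h0 with h0 | h0 <;> [left; right] <;> simp [hatXi, h0]
  · rcases h0 with h0 | h0
    · have : σ' v ≠ 0 := by omega
      rw [show hatXi σ v = 0 from (hatXi_zero_iff σ v).2 h0]
      exact fun hc => this ((hatXi_zero_iff σ' v).1 hc.symm)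
    · have : σ v ≠ 0 := by omega
      rw [show hatXi σ' v = 0 from (hatXi_zero_iff σ' v).2 h0]
      exact fun hc => this ((hatXi_zero_iff σ v).1 hc)

/-- Projection onto two particle types -/
theorem projection_two_types {V : Type*} [Fintype V] (G : SimpleGraph V)
    (M : ℕ) (hM : 2 ≤ M) :
    (∀ σ : V → ℕ, IsWR G M σ → IsWR G M (hatXi σ)) ∧
    (∀ σ : V → ℕ, IsWR G M σ → Hen (hatXi σ) = Hen σ) ∧
    (∀ σ σ' : V → ℕ, IsWR G M σ → IsWR G M σ' → Upd σ σ' →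
      Upd (hatXi σ) (hatXi σ')) ∧
    (∀ (ω : List (V → ℕ)) (σ σ' : V → ℕ), IsPath G M ω σ σ' →
      IsPath G M (ω.map hatXi) (hatXi σ) (hatXi σ') ∧
      (ω.map hatXi).length = ω.length ∧
      (ω.map hatXi).map Hen = ω.map Hen ∧
      pathHeight (ω.map hatXi) = pathHeight ω) := by
  have hA : ∀ σ : V → ℕ, IsWR G M σ → IsWR G M (hatXi σ) := by
    rintro σ ⟨hb, hadj⟩
    constructor
    · intro v; unfold hatXi; split <;> omega
    · intro v w h
      rcases hadj v w h with h0 | h0 | h0 <;> simp [hatXi, h0]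
  refine ⟨hA, fun σ _ => Hen_hatXi σ, fun σ σ' _ _ h => Upd_hatXi h, ?_⟩
  rintro ω σ σ' ⟨hne, hhd, hlast, hwr, hch⟩
  have hmapH : (ω.map hatXi).map Hen = ω.map Hen := by
    rw [List.map_map]
    exact List.map_congr_left fun η _ => Hen_hatXi η
  refine ⟨⟨by simpa using hne, ?_, ?_, ?_, ?_⟩, by simp, hmapH, ?_⟩
  · rw [List.head?_map, hhd]; rfl
  · rw [List.getLast?_map, hlast]; rfl
  · intro η hη
    rcases List.mem_map.1 hη with ⟨τ, hτ, rfl⟩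
    exact hA τ (hwr τ hτ)
  · unfold List.Chain' at hch ⊢; rw [List.isChain_map]
    exact hch.imp fun a b h => h.imp (congrArg hatXi) Upd_hatXi
  · unfold pathHeight
    congr 1
    ext h
    simp only [Set.mem_setOf_eq, List.mem_map]
    constructor
    · rintro ⟨η, ⟨τ, hτ, rfl⟩, rfl⟩; exact ⟨τ, hτ, (Hen_hatXi τ).symm⟩
    · rintro ⟨τ, hτ, rfl⟩; exact ⟨hatXi τ, ⟨τ, hτ, rfl⟩, Hen_hatXi τ⟩
end
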